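/- Let X be a topological space such that for every sequence (𝒰_n) of open γ-covers of X there are selections U_n ∈ 𝒰_n and a subspace X' ⊆ X satisfying S₁(Γ,Γ) with {U_n : n ∈ ℕ} a γ-cover of X \ X'. Then X satisfies S₁(Γ,Γ). -/

import Mathlib

open Set

/-- `𝒰` is a γ-cover of `Y` (by open subsets of the ambient space, proper on `Y`):
an infinite family of open sets, none containing all of `Y`, such that each
point of `Y` belongs to all but finitely many members. -/
def IsGammaCover {X : Type*} [TopologicalSpace X] (Y : Set X) (𝒰 : Set (Set X)) : Prop :=
  𝒰.Infinite ∧ (∀ U ∈ 𝒰, IsOpen U ∧ ¬ Y ⊆ U) ∧ ∀ y ∈ Y, {U ∈ 𝒰 | y ∉ U}.Finite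

/-- `Y` satisfies `S₁(Γ,Γ)`. -/
def S1GG {X : Type*} [TopologicalSpace X] (Y : Set X) : Prop :=
  ∀ 𝒰 : ℕ → Set (Set X), (∀ n, IsGammaCover Y (𝒰 n)) →
    ∃ U : ℕ → Set X, (∀ n, U n ∈ 𝒰 n) ∧ IsGammaCover Y {V | ∃ n, V = U n}

lemma exists_fiber_infinite {α β : Type*} {f : α → β} {s : Set α}
    (hs : s.Infinite) (hfin : (f '' s).Finite) : ∃ b, {a ∈ s | f a = b}.Infinite := by
  by_contra hc
  push_neg at hc
  have hsub : s ⊆ ⋃ b ∈ f '' s, {a ∈ s | f a = b} := fun a ha =>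
    Set.mem_biUnion ⟨a, ha, rfl⟩ ⟨ha, rfl⟩
  exact hs ((hfin.biUnion fun b _ => hc b).subset hsub)

theorem stmt9 {X : Type*} [TopologicalSpace X]
    (h : ∀ 𝒰 : ℕ → Set (Set X), (∀ n, IsGammaCover (univ : Set X) (𝒰 n)) →
      ∃ U : ℕ → Set X, (∀ n, U n ∈ 𝒰 n) ∧
        ∃ X' : Set X, S1GG X' ∧ IsGammaCover (univ \ X') {V | ∃ n, V = U n}) :
    S1GG (univ : Set X) := by
  classical
  intro 𝒰 h𝒰
  -- injective enumerations of the covers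
  have hU : ∀ i : ℕ, ∃ u : ℕ → Set X, Function.Injective u ∧ ∀ k, u k ∈ 𝒰 i := by
    intro i
    obtain ⟨hinf, -, -⟩ := h𝒰 i
    refine ⟨fun k => ((Set.Infinite.natEmbedding _ hinf) k : Set X), ?_,
      fun k => ((Set.Infinite.natEmbedding _ hinf) k).2⟩
    intro a b hab
    exact (Set.Infinite.natEmbedding _ hinf).injective (Subtype.ext hab)
  choose u hu_inj hu_mem using hU
  have hu_open : ∀ i k, IsOpen (u i k) := fun i k => ((h𝒰 i).2.1 _ (hu_mem i k)).1
  have hu_proper : ∀ i k, ¬ (univ : Set X) ⊆ u i k := fun i k => ((h𝒰 i).2.1 _ (hu_mem i k)).2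
  have hu_row : ∀ i (x : X), {k : ℕ | x ∉ u i k}.Finite := by
    intro i x
    have hfin : {U ∈ 𝒰 i | x ∉ U}.Finite := (h𝒰 i).2.2 x (mem_univ x)
    have hsub : {k : ℕ | x ∉ u i k} ⊆ u i ⁻¹' {U ∈ 𝒰 i | x ∉ U} := fun k hk => ⟨hu_mem i k, hk⟩
    exact (hfin.preimage (hu_inj i).injOn).subset hsub
  -- diagonal intersections
  set v : ℕ → ℕ → Set X := fun n k => ⋂ i ∈ Finset.range (n + 1), u i k with hv_def
  have hv_subset : ∀ n k i, i ≤ n → v n k ⊆ u i k := by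
    intro n k i hi
    exact Set.biInter_subset_of_mem (Finset.mem_range.2 (Nat.lt_succ_of_le hi))
  have hv_open : ∀ n k, IsOpen (v n k) := fun n k => isOpen_biInter_finset fun i _ => hu_open i k
  have hv_proper : ∀ n k, ¬ (univ : Set X) ⊆ v n k :=
    fun n k hcon => hu_proper n k (hcon.trans (hv_subset n k n le_rfl))
  have hv_row : ∀ n (x : X), {k : ℕ | x ∉ v n k}.Finite := by
    intro n x
    have hsub : {k : ℕ | x ∉ v n k} ⊆ ⋃ i ∈ Finset.range (n + 1), {k : ℕ | x ∉ u i k} := by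
      intro k hk
      simp only [mem_setOf_eq] at hk
      by_contra hc
      simp only [mem_iUnion, mem_setOf_eq, not_exists, not_not] at hc
      exact hk (Set.mem_biInter fun i hi => hc i hi)
    exact (((Finset.range (n + 1)).finite_toSet.biUnion fun i _ => hu_row i x).subset hsub)
  -- the covers we feed to `h`
  set 𝒱 : ℕ → Set (Set X) := fun n => {V | ∃ k, n ≤ k ∧ V = v n k} with h𝒱_def
  have h𝒱γ : ∀ n, IsGammaCover (univ : Set X) (𝒱 n) := by
    intro n
    refine ⟨?_, ?_, ?_⟩
    · by_contra hfin
      rw [Set.not_infinite] at hfin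
      have himg : ((fun k => v n k) '' {k | n ≤ k}).Finite := by
        refine hfin.subset ?_
        rintro V ⟨k, hk, rfl⟩
        exact ⟨k, hk, rfl⟩
      obtain ⟨E, hE⟩ := exists_fiber_infinite (Set.Ici_infinite n) himg
      obtain ⟨k₀, hk₀⟩ := hE.nonempty
      have hEuniv : (univ : Set X) ⊆ E := by
        intro x _
        obtain ⟨k, hk⟩ := (hE.diff (hv_row n x)).nonempty
        rw [← hk.1.2]
        exact not_not.1 hk.2
      exact hv_proper n k₀ (by rw [hk₀.2]; exact hEuniv)
    · rintro U ⟨k, hk, rfl⟩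
      exact ⟨hv_open n k, hv_proper n k⟩
    · intro y _
      have hsub : {U ∈ 𝒱 n | y ∉ U} ⊆ (fun k => v n k) '' {k | y ∉ v n k} := by
        rintro U ⟨⟨k, hk, rfl⟩, hyU⟩
        exact ⟨k, hyU, rfl⟩
      exact ((hv_row n y).image _).subset hsub
  obtain ⟨W, hW_mem, X', hX'S1, hF1⟩ := h 𝒱 h𝒱γ
  have hWk : ∀ n, ∃ k, n ≤ k ∧ W n = v n k := fun n => hW_mem n
  choose κ hκ_ge hκ_eq using hWk
  -- a strictly monotone sequence on which `W` is injective
  set S : Set ℕ := {n | ∀ n' < n, W n' ≠ W n} with hS_def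
  have hF1_inf : {V | ∃ n, V = W n}.Infinite := hF1.1
  have hS_inf : S.Infinite := by
    have hex : ∀ V : {V | ∃ n, V = W n}, ∃ n, n ∈ S ∧ W n = (V : Set X) := by
      rintro ⟨V, hV⟩
      obtain ⟨n, rfl⟩ := hV
      have hexists : ∃ t, W t = W n := ⟨n, rfl⟩
      refine ⟨Nat.find hexists, ?_, Nat.find_spec hexists⟩
      intro n' hn' hcon
      exact Nat.find_min hexists hn' (hcon.trans (Nat.find_spec hexists))
    haveI : Infinite {V | ∃ n, V = W n} := hF1_inf.to_subtype
    choose g hg_mem hg_eq using hex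
    have hg_inj : Function.Injective g := by
      intro a b hab
      apply Subtype.ext
      rw [← hg_eq a, ← hg_eq b, hab]
    exact Set.infinite_of_injective_forall_mem hg_inj hg_mem
  have hSset : {n | (fun t => t ∈ S) n}.Infinite := hS_inf
  set m : ℕ → ℕ := Nat.nth (fun t => t ∈ S) with hm_def
  have hm_mono : StrictMono m := Nat.nth_strictMono hSset
  have hm_mem : ∀ j, m j ∈ S := fun j => Nat.nth_mem_of_infinite hSset j
  have hm_le : ∀ j, j ≤ m j := fun j => hm_mono.le_apply
  have hWm_inj : Function.Injective fun j => W (m j) := by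
    intro a b hab
    simp only at hab
    rcases lt_trichotomy a b with hab' | hab' | hab'
    · exact absurd hab (hm_mem b (m a) (hm_mono hab'))
    · exact hab'
    · exact absurd hab.symm (hm_mem a (m b) (hm_mono hab'))
  -- key fact for points outside X'
  have hkey : ∀ x, x ∉ X' → ∀ i j, i ≤ j → x ∉ u i (κ (m j)) → x ∉ W (m j) := by
    intro x hx i j hij hxu hxW
    rw [hκ_eq (m j)] at hxW
    exact hxu (hv_subset (m j) (κ (m j)) i (hij.trans (hm_le j)) hxW)
  set C : ℕ → Set ℕ := fun i => {j | i ≤ j ∧ ¬ X' ⊆ u i (κ (m j))} with hC_def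
  set A : ℕ → Set (Set X) := fun i => (fun j => u i (κ (m j))) '' C i with hA_def
  have hA_γ : ∀ i, (C i).Infinite → IsGammaCover X' (A i) := by
    intro i hCi
    refine ⟨?_, ?_, ?_⟩
    · have hcol : ((fun j => κ (m j)) '' C i).Infinite := by
        intro hfin
        obtain ⟨B, hB⟩ := hfin.bddAbove
        refine hCi ((Set.finite_Iic B).subset ?_)
        intro j hj
        have hle : κ (m j) ≤ B := hB ⟨j, hj, rfl⟩
        exact (hm_le j).trans ((hκ_ge (m j)).trans hle)
      have h2 : ((u i) '' ((fun j => κ (m j)) '' C i)).Infinite := hcol.image (hu_inj i).injOn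
      rwa [Set.image_image] at h2
    · rintro U ⟨j, hj, rfl⟩
      exact ⟨hu_open i (κ (m j)), hj.2⟩
    · intro y _
      have hsub : {U ∈ A i | y ∉ U} ⊆ (u i) '' {k | y ∉ u i k} := by
        rintro U ⟨⟨j, hj, rfl⟩, hyU⟩
        exact ⟨κ (m j), hyU, rfl⟩
      exact ((hu_row i y).image _).subset hsub
  have hD : ∀ i, ¬ (C i).Infinite → ∃ j, i ≤ j ∧ X' ⊆ u i (κ (m j)) := by
    intro i hCi
    rw [Set.not_infinite] at hCi
    obtain ⟨j, hj1, hj2⟩ := ((Set.Ici_infinite i).diff hCi).nonempty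
    refine ⟨j, hj1, ?_⟩
    by_contra hcon
    exact hj2 ⟨hj1, hcon⟩
  -- shared: finiteness of bad indices for points outside X'
  have main : ∀ (ans : ℕ → Set X) (jw : ℕ → ℕ), (∀ i, i ≤ jw i) →
      (∀ i, ans i = u i (κ (m (jw i)))) → ∀ x, x ∉ X' → {i | x ∉ ans i}.Finite := by
    intro ans jw hge heq x hx
    have hBad : {V ∈ {V | ∃ n, V = W n} | x ∉ V}.Finite := hF1.2.2 x ⟨mem_univ x, hx⟩
    have hJ : ((fun j => W (m j)) ⁻¹' {V ∈ {V | ∃ n, V = W n} | x ∉ V}).Finite :=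
      hBad.preimage hWm_inj.injOn
    obtain ⟨B, hB⟩ := hJ.bddAbove
    refine (Set.finite_Iic B).subset ?_
    intro i hi
    have hxu : x ∉ u i (κ (m (jw i))) := by rw [← heq i]; exact hi
    have hxW : x ∉ W (m (jw i)) := hkey x hx i (jw i) (hge i) hxu
    have hmem : jw i ∈ (fun j => W (m j)) ⁻¹' {V ∈ {V | ∃ n, V = W n} | x ∉ V} :=
      ⟨⟨m (jw i), rfl⟩, hxW⟩
    exact (hge i).trans (hB hmem)
  -- shared: infinitude of the selected family
  have main2 : ∀ (ans : ℕ → Set X) (jw : ℕ → ℕ), (∀ i, i ≤ jw i) →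
      (∀ i, ans i = u i (κ (m (jw i)))) → ∀ T : Set ℕ, T.Infinite →
      (∀ i ∈ T, X' ⊆ ans i) → {V | ∃ i, V = ans i}.Infinite := by
    intro ans jw hge heq T hT hTX hFfin
    have himg : (ans '' T).Finite := by
      refine hFfin.subset ?_
      rintro V ⟨i, _, rfl⟩
      exact ⟨i, rfl⟩
    obtain ⟨W₀, hW₀⟩ := exists_fiber_infinite hT himg
    obtain ⟨i₀, hi₀⟩ := hW₀.nonempty
    have hWuniv : (univ : Set X) ⊆ W₀ := by
      intro x _
      by_cases hx : x ∈ X'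
      · rw [← hi₀.2]; exact hTX i₀ hi₀.1 hx
      · obtain ⟨i, hi⟩ := (hW₀.diff (main ans jw hge heq x hx)).nonempty
        rw [← hi.1.2]
        exact not_not.1 hi.2
    have hprop : ¬ (univ : Set X) ⊆ ans i₀ := by rw [heq i₀]; exact hu_proper _ _
    exact hprop (by rw [hi₀.2]; exact hWuniv)
  by_cases hR : {i | (C i).Infinite}.Infinite
  · -- infinitely many "proper" rows
    have hρ : ∀ t, Nat.nth (fun i => i ∈ {i | (C i).Infinite}) t ∈ {i | (C i).Infinite} :=
      fun t => Nat.nth_mem_of_infinite hR t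
    set ρ : ℕ → ℕ := Nat.nth (fun i => i ∈ {i | (C i).Infinite}) with hρ_def
    set 𝒢 : ℕ → Set (Set X) := fun i => if (C i).Infinite then A i else A (ρ i) with h𝒢_def
    have h𝒢γ : ∀ i, IsGammaCover X' (𝒢 i) := by
      intro i
      by_cases hCi : (C i).Infinite
      · simpa [h𝒢_def, if_pos hCi] using hA_γ i hCi
      · simpa [h𝒢_def, if_neg hCi] using hA_γ (ρ i) (hρ i)
    obtain ⟨Vsel, hVmem, hF2⟩ := hX'S1 𝒢 h𝒢γ
    have hdef : ∀ i, ∃ (Sa : Set X) (j : ℕ), i ≤ j ∧ Sa = u i (κ (m j)) ∧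
        (((C i).Infinite ∧ Sa = Vsel i) ∨ (¬ (C i).Infinite ∧ X' ⊆ Sa)) := by
      intro i
      by_cases hCi : (C i).Infinite
      · have hmem : Vsel i ∈ A i := by
          have h1 := hVmem i
          simpa [h𝒢_def, if_pos hCi] using h1
        obtain ⟨j, hj, hje⟩ := hmem
        exact ⟨Vsel i, j, hj.1, hje.symm, Or.inl ⟨hCi, rfl⟩⟩
      · obtain ⟨j, hj1, hj2⟩ := hD i hCi
        exact ⟨u i (κ (m j)), j, hj1, rfl, Or.inr ⟨hCi, hj2⟩⟩
    choose ans jw hge heq hside using hdef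
    refine ⟨ans, fun i => by rw [heq i]; exact hu_mem _ _, ?_, ?_, ?_⟩
    · -- infinite
      by_cases hRc : {i | ¬ (C i).Infinite}.Infinite
      · refine main2 ans jw hge heq _ hRc ?_
        intro i hiT
        rcases hside i with ⟨hCi, _⟩ | ⟨_, hsub⟩
        · exact absurd hCi hiT
        · exact hsub
      · rw [Set.not_infinite] at hRc
        have hF2inf : {Sa | ∃ i, Sa = Vsel i}.Infinite := hF2.1
        have himg : (Vsel '' {i | ¬ (C i).Infinite}).Finite := hRc.image Vsel
        refine (hF2inf.diff himg).mono ?_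
        rintro Sa ⟨⟨i, rfl⟩, hnot⟩
        rcases hside i with ⟨_, hv⟩ | ⟨hnc, _⟩
        · exact ⟨i, hv.symm⟩
        · exact absurd ⟨i, hnc, rfl⟩ hnot
    · rintro U ⟨i, rfl⟩
      rw [heq i]
      exact ⟨hu_open _ _, hu_proper _ _⟩
    · intro y _
      by_cases hy : y ∈ X'
      · have hsub : {U ∈ {V | ∃ i, V = ans i} | y ∉ U} ⊆
            {U ∈ {Sa | ∃ i, Sa = Vsel i} | y ∉ U} := by
          rintro U ⟨⟨i, rfl⟩, hyU⟩
          rcases hside i with ⟨_, hv⟩ | ⟨_, hsub'⟩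
          · exact ⟨⟨i, hv⟩, hyU⟩
          · exact absurd (hsub' hy) hyU
        exact (hF2.2.2 y hy).subset hsub
      · refine ((main ans jw hge heq y hy).image ans).subset ?_
        rintro U ⟨⟨i, rfl⟩, hyU⟩
        exact ⟨i, hyU, rfl⟩
  · -- only finitely many "proper" rows
    have hRfin : {i | (C i).Infinite}.Finite := Set.not_infinite.1 hR
    have hdef : ∀ i, ∃ (Sa : Set X) (j : ℕ), i ≤ j ∧ Sa = u i (κ (m j)) ∧
        (¬ (C i).Infinite → X' ⊆ Sa) := by
      intro i
      by_cases hCi : (C i).Infinite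
      · obtain ⟨j, hj⟩ := hCi.nonempty
        exact ⟨u i (κ (m j)), j, hj.1, rfl, fun hc => absurd hCi hc⟩
      · obtain ⟨j, hj1, hj2⟩ := hD i hCi
        exact ⟨u i (κ (m j)), j, hj1, rfl, fun _ => hj2⟩
    choose ans jw hge heq hside using hdef
    refine ⟨ans, fun i => by rw [heq i]; exact hu_mem _ _, ?_, ?_, ?_⟩
    · refine main2 ans jw hge heq {i | ¬ (C i).Infinite} ?_ fun i hiT => hside i hiT
      have := hRfin.infinite_compl
      simpa [Set.compl_setOf] using this
    · rintro U ⟨i, rfl⟩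
      rw [heq i]
      exact ⟨hu_open _ _, hu_proper _ _⟩
    · intro y _
      by_cases hy : y ∈ X'
      · refine (hRfin.image ans).subset ?_
        rintro U ⟨⟨i, rfl⟩, hyU⟩
        by_cases hCi : (C i).Infinite
        · exact ⟨i, hCi, rfl⟩
        · exact absurd (hside i hCi hy) hyU
      · refine ((main ans jw hge heq y hy).image ans).subset ?_
        rintro U ⟨⟨i, rfl⟩, hyU⟩
        exact ⟨i, hyU, rfl⟩
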